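/- Let A ∈ [0,1] and let M = (1/(1+A)²)·[[2A, A+1],[−A²+2A+1, −A²−A]] (the inverse of dT when A ∈ (0,1)). If v ∈ ℝ² satisfies ‖v‖ < √2 in the Euclidean norm, then ‖M v‖ < 2. -/

import Mathlib

/-- The inverse of the linear part of the canonical affine transformation:
`M = (1/(1+A)²)·[[2A, A+1],[−A²+2A+1, −A²−A]]`. -/
noncomputable def Mi (A : ℝ) (v : ℝ × ℝ) : ℝ × ℝ :=
  ((2 * A * v.1 + (A + 1) * v.2) / (1 + A) ^ 2,
   ((-A ^ 2 + 2 * A + 1) * v.1 + (-A ^ 2 - A) * v.2) / (1 + A) ^ 2)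

/-- for `A ∈ [0,1]`, if `‖v‖ < √2` (Euclidean norm) then `‖M v‖ < 2`. -/
theorem stmt7 (A : ℝ) (hA : A ∈ Set.Icc (0 : ℝ) 1) (v : ℝ × ℝ)
    (hv : Real.sqrt (v.1 ^ 2 + v.2 ^ 2) < Real.sqrt 2) :
    Real.sqrt ((Mi A v).1 ^ 2 + (Mi A v).2 ^ 2) < 2 := by
  obtain ⟨hA0, hA1⟩ := hA
  have hd : (0:ℝ) < (1 + A) ^ 2 := by positivity
  have hv2 : v.1 ^ 2 + v.2 ^ 2 < 2 := by
    have := (Real.sqrt_lt_sqrt_iff (by positivity)).mp hv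
    linarith
  rw [show (2:ℝ) = Real.sqrt 4 by
    rw [show (4:ℝ) = 2^2 by norm_num, Real.sqrt_sq (by norm_num)]]
  apply Real.sqrt_lt_sqrt (by positivity)
  simp only [Mi]
  rw [div_pow, div_pow, ← add_div, div_lt_iff₀ (by positivity)]
  set x := v.1; set y := v.2
  set S : ℝ := 2*A^4 - 2*A^3 + 8*A^2 + 6*A + 2 with hSdef
  have hCS : (2 * A * x + (A + 1) * y) ^ 2 +
      ((-A ^ 2 + 2 * A + 1) * x + (-A ^ 2 - A) * y) ^ 2 ≤ S * (x ^ 2 + y ^ 2) := by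
    nlinarith [sq_nonneg (2*A*y - (A+1)*x), sq_nonneg ((-A^2+2*A+1)*y - (-A^2-A)*x)]
  have hSpos : (0:ℝ) < S := by nlinarith [sq_nonneg A, sq_nonneg (A^2 - A)]
  have h1 : S * (x ^ 2 + y ^ 2) < S * 2 := by
    exact mul_lt_mul_of_pos_left hv2 hSpos
  have h2 : S * 2 ≤ 4 * ((1 + A) ^ 2) ^ 2 := by
    nlinarith [mul_nonneg (mul_nonneg hA0 hA0) hA0, sq_nonneg A]
  linarith
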